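/- Let G be a k-uniform hypergraph in which every hyperedge intersects at most d other hyperedges. If e·(d+1) ≤ 2^{x(k-1)} (where e is Euler's number), then G has a bicoloring cover of size x. -/

import Mathlib

set_option linter.unusedSectionVars false

section
variable {V : Type*} [Fintype V] {β : Type*} [Fintype β]

/-- number of functions satisfying P -/
noncomputable def cnt (V β : Type*) (P : (V → β) → Prop) : ℕ := {ω : V → β | P ω}.ncard

lemma cnt_congr {P Q : (V → β) → Prop} (h : ∀ ω, P ω ↔ Q ω) : cnt V β P = cnt V β Q := by
  unfold cnt; congr 1; ext ω; exact h ω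

lemma cnt_mono {P Q : (V → β) → Prop} (h : ∀ ω, P ω → Q ω) : cnt V β P ≤ cnt V β Q := by
  exact Set.ncard_le_ncard (fun ω hω => h ω hω) (Set.toFinite _)

lemma cnt_eq_card (P : (V → β) → Prop) : cnt V β P = Nat.card {ω : V → β // P ω} := by
  rw [cnt, ← Nat.card_coe_set_eq]
  exact Nat.card_congr (Equiv.subtypeEquivRight (by simp))

lemma cnt_split (P R : (V → β) → Prop) :
    cnt V β R = cnt V β (fun ω => P ω ∧ R ω) + cnt V β (fun ω => ¬ P ω ∧ R ω) := by
  have h := Set.ncard_inter_add_ncard_diff_eq_ncard {ω : V → β | R ω} {ω : V → β | P ω}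
    (Set.toFinite _)
  rw [cnt, cnt, cnt, ← h]
  congr 1
  · congr 1; ext ω; simp [and_comm]
  · congr 1; ext ω; simp [Set.mem_diff, and_comm]

lemma cnt_pos {P : (V → β) → Prop} : 0 < cnt V β P ↔ ∃ ω, P ω := by
  unfold cnt
  rw [Set.ncard_pos (Set.toFinite _)]
  exact ⟨fun ⟨ω, h⟩ => ⟨ω, h⟩, fun ⟨ω, h⟩ => ⟨ω, h⟩⟩

lemma cnt_indep [Nonempty β] (s : Finset V) [DecidablePred (· ∈ s)] (P Q : (V → β) → Prop)
    (hP : ∀ ω ω' : V → β, (∀ a ∈ s, ω a = ω' a) → (P ω ↔ P ω'))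
    (hQ : ∀ ω ω' : V → β, (∀ a ∉ s, ω a = ω' a) → (Q ω ↔ Q ω')) :
    cnt V β (fun ω => P ω ∧ Q ω) * Nat.card (V → β) = cnt V β P * cnt V β Q := by
  classical
  set e := Equiv.piEquivPiSubtypeProd (fun a => a ∈ s) (fun _ => β) with he
  set b0 : β := Classical.arbitrary β
  set P' : ({a : V // a ∈ s} → β) → Prop := fun f => P (e.symm (f, fun _ => b0)) with hP'
  set Q' : ({a : V // ¬ a ∈ s} → β) → Prop := fun g => Q (e.symm (fun _ => b0, g)) with hQ'
  have key1 : ∀ ω : V → β, P ω ↔ P' (e ω).1 := by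
    intro ω
    apply hP
    intro a ha
    simp [he, Equiv.piEquivPiSubtypeProd, ha]
  have key2 : ∀ ω : V → β, Q ω ↔ Q' (e ω).2 := by
    intro ω
    apply hQ
    intro a ha
    simp [he, Equiv.piEquivPiSubtypeProd, ha]
  have c1 : cnt V β (fun ω => P ω ∧ Q ω)
      = Nat.card {f : {a : V // a ∈ s} → β // P' f} * Nat.card {g : {a : V // ¬ a ∈ s} → β // Q' g} := by
    rw [cnt_eq_card, ← Nat.card_prod]
    exact Nat.card_congr ((Equiv.subtypeEquiv e (fun ω => by rw [key1 ω, key2 ω])).trans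
      (Equiv.subtypeProdEquivProd (p := P') (q := Q')))
  have c2 : cnt V β P = Nat.card {f : {a : V // a ∈ s} → β // P' f} * Nat.card ({a : V // ¬ a ∈ s} → β) := by
    rw [cnt_eq_card, ← Nat.card_prod]
    exact Nat.card_congr ((Equiv.subtypeEquiv e (fun ω => by
        rw [key1 ω]; exact Iff.intro (fun h => ⟨h, trivial⟩) (fun h => h.1))).trans
      ((Equiv.subtypeProdEquivProd (p := P') (q := fun _ => True)).trans
        (Equiv.prodCongr (Equiv.refl _) (Equiv.subtypeUnivEquiv fun _ => trivial))))
  have c3 : cnt V β Q = Nat.card ({a : V // a ∈ s} → β) * Nat.card {g : {a : V // ¬ a ∈ s} → β // Q' g} := by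
    rw [cnt_eq_card, ← Nat.card_prod]
    exact Nat.card_congr ((Equiv.subtypeEquiv e (fun ω => by
        rw [key2 ω]; exact Iff.intro (fun h => ⟨trivial, h⟩) (fun h => h.2))).trans
      ((Equiv.subtypeProdEquivProd (p := fun _ => True) (q := Q')).trans
        (Equiv.prodCongr (Equiv.subtypeUnivEquiv fun _ => trivial) (Equiv.refl _))))
  have c4 : Nat.card (V → β) = Nat.card ({a : V // a ∈ s} → β) * Nat.card ({a : V // ¬ a ∈ s} → β) := by
    rw [← Nat.card_prod]
    exact Nat.card_congr e
  rw [c1, c2, c3, c4]; ring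

end

section
variable {V : Type*} [Fintype V] [DecidableEq V] {β : Type*} [Fintype β] [Nonempty β]

lemma lll_core (Bad : Finset V → (V → β) → Prop)
    (hBdep : ∀ f : Finset V, ∀ ω ω' : V → β, (∀ a ∈ f, ω a = ω' a) → (Bad f ω ↔ Bad f ω'))
    (E : Finset (Finset V)) (d : ℕ)
    (hdep : ∀ e ∈ E, (E.filter (fun f => f ≠ e ∧ (e ∩ f).Nonempty)).card ≤ d)
    (p B : ℝ) (hp0 : 0 ≤ p) (hB0 : 0 ≤ B) (hB1 : B < 1) (hpB : p ≤ B * (1 - B) ^ d)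
    (hp : ∀ f ∈ E, (cnt V β (Bad f) : ℝ) ≤ p * Nat.card (V → β)) :
    0 < cnt V β (fun ω => ∀ f ∈ E, ¬ Bad f ω) := by
  classical
  set Good : Finset (Finset V) → ℕ := fun S => cnt V β (fun ω => ∀ f ∈ S, ¬ Bad f ω) with hGood
  have hΩ : 0 < Nat.card (V → β) := Nat.card_pos
  have h1B : (0:ℝ) ≤ 1 - B := by linarith
  have split_ins : ∀ (f : Finset V) (S : Finset (Finset V)),
      Good S = cnt V β (fun ω => Bad f ω ∧ ∀ g ∈ S, ¬ Bad g ω) + Good (insert f S) := by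
    intro f S
    rw [hGood]
    simp only
    rw [cnt_split (Bad f) (fun ω => ∀ g ∈ S, ¬ Bad g ω)]
    congr 1
    apply cnt_congr
    intro ω
    simp [Finset.forall_mem_insert]
  -- main inductive claim
  have key : ∀ n : ℕ, ∀ S ⊆ E, S.card = n → ∀ e ∈ E, e ∉ S →
      (cnt V β (fun ω => Bad e ω ∧ ∀ f ∈ S, ¬ Bad f ω) : ℝ) ≤ B * Good S := by
    intro n
    induction n using Nat.strong_induction_on with
    | _ n ih =>
      intro S hSE hcard e heE heS
      set S1 : Finset (Finset V) := S.filter (fun f => (e ∩ f).Nonempty) with hS1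
      set S2 : Finset (Finset V) := S \ S1 with hS2
      have hS1sub : S1 ⊆ S := Finset.filter_subset _ _
      have hunion : S2 ∪ S1 = S := Finset.sdiff_union_of_subset hS1sub
      -- cardinality of S1 is at most d
      have hS1d : S1.card ≤ d := by
        refine le_trans (Finset.card_le_card ?_) (hdep e heE)
        intro f hf
        rw [hS1, Finset.mem_filter] at hf
        rw [Finset.mem_filter]
        exact ⟨hSE hf.1, fun h => heS (h ▸ hf.1), hf.2⟩
      -- Step B : Good (S2 ∪ T) ≥ (1-B)^|T| * Good S2 for T ⊆ S1
      have stepB : ∀ T ⊆ S1, (1 - B) ^ T.card * (Good S2 : ℝ) ≤ Good (S2 ∪ T) := by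
        intro T
        induction T using Finset.induction_on with
        | empty => intro _; simp
        | @insert f T hfT ihT =>
          intro hins
          have hfS1 : f ∈ S1 := hins (Finset.mem_insert_self f T)
          have hTsub : T ⊆ S1 := fun g hg => hins (Finset.mem_insert_of_mem hg)
          have hfS : f ∈ S := hS1sub hfS1
          have hfS2 : f ∉ S2 ∪ T := by
            rw [Finset.mem_union]
            rintro (h | h)
            · rw [hS2, Finset.mem_sdiff] at h; exact h.2 hfS1
            · exact hfT h
          have hsubS : S2 ∪ T ⊆ S.erase f := by
            intro g hg
            rw [Finset.mem_erase]
            refine ⟨fun h => hfS2 (h ▸ hg), ?_⟩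
            rcases Finset.mem_union.mp hg with h | h
            · exact (Finset.mem_sdiff.mp h).1
            · exact hS1sub (hTsub h)
          have hcc : (S2 ∪ T).card < n := by
            calc (S2 ∪ T).card ≤ (S.erase f).card := Finset.card_le_card hsubS
            _ < S.card := Finset.card_erase_lt_of_mem hfS
            _ = n := hcard
          have hkey := ih _ hcc (S2 ∪ T)
            (fun g hg => hSE ((Finset.erase_subset f S) (hsubS hg))) rfl f (hSE hfS) hfS2
          -- Good (insert f (S2 ∪ T)) ≥ (1-B) * Good (S2 ∪ T)
          have hsplit := split_ins f (S2 ∪ T)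
          have hge : (1 - B) * (Good (S2 ∪ T) : ℝ) ≤ Good (insert f (S2 ∪ T)) := by
            have : (Good (S2 ∪ T) : ℝ) = (cnt V β (fun ω => Bad f ω ∧ ∀ g ∈ S2 ∪ T, ¬ Bad g ω) : ℝ)
                + Good (insert f (S2 ∪ T)) := by exact_mod_cast hsplit
            nlinarith [hkey]
          have hic : S2 ∪ insert f T = insert f (S2 ∪ T) := by
            ext g
            simp only [Finset.mem_union, Finset.mem_insert]
            tauto
          rw [hic, Finset.card_insert_of_notMem hfT, pow_succ]
          calc (1 - B) ^ T.card * (1 - B) * (Good S2 : ℝ)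
              = (1 - B) * ((1 - B) ^ T.card * (Good S2 : ℝ)) := by ring
            _ ≤ (1 - B) * (Good (S2 ∪ T) : ℝ) := by
                exact mul_le_mul_of_nonneg_left (ihT hTsub) h1B
            _ ≤ Good (insert f (S2 ∪ T)) := hge
      -- Step A : independence
      have hA : (cnt V β (fun ω => Bad e ω ∧ ∀ f ∈ S2, ¬ Bad f ω) : ℝ) * Nat.card (V → β)
          = (cnt V β (Bad e) : ℝ) * Good S2 := by
        have := cnt_indep (β := β) e (Bad e) (fun ω => ∀ f ∈ S2, ¬ Bad f ω)
          (hBdep e)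
          (by
            intro ω ω' hagree
            have : ∀ f ∈ S2, Bad f ω ↔ Bad f ω' := by
              intro f hf
              apply hBdep
              intro a ha
              apply hagree
              intro hae
              rw [hS2, Finset.mem_sdiff, hS1, Finset.mem_filter] at hf
              exact hf.2 ⟨hf.1, ⟨a, Finset.mem_inter.mpr ⟨hae, ha⟩⟩⟩
            constructor <;> intro h f hf
            · exact fun hb => h f hf ((this f hf).mpr hb)
            · exact fun hb => h f hf ((this f hf).mp hb))
        exact_mod_cast congrArg Nat.cast this
      -- chain of inequalities
      have mono1 : (cnt V β (fun ω => Bad e ω ∧ ∀ f ∈ S, ¬ Bad f ω) : ℝ)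
          ≤ cnt V β (fun ω => Bad e ω ∧ ∀ f ∈ S2, ¬ Bad f ω) := by
        exact_mod_cast cnt_mono (P := fun ω => Bad e ω ∧ ∀ f ∈ S, ¬ Bad f ω)
          (Q := fun ω => Bad e ω ∧ ∀ f ∈ S2, ¬ Bad f ω)
          (fun ω h => ⟨h.1, fun f hf => h.2 f ((Finset.sdiff_subset) hf)⟩)
      have h2 : (cnt V β (fun ω => Bad e ω ∧ ∀ f ∈ S2, ¬ Bad f ω) : ℝ) ≤ p * Good S2 := by
        have hpe := hp e heE
        have hΩR : (0:ℝ) < Nat.card (V → β) := by exact_mod_cast hΩ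
        rw [← mul_le_mul_iff_of_pos_right hΩR, hA]
        calc (cnt V β (Bad e) : ℝ) * Good S2 ≤ (p * Nat.card (V → β)) * Good S2 := by
              apply mul_le_mul_of_nonneg_right hpe (by positivity)
          _ = p * (Good S2 : ℝ) * Nat.card (V → β) := by ring
      have h3 : (1 - B) ^ S1.card * (Good S2 : ℝ) ≤ Good S := by
        have := stepB S1 (le_refl S1)
        rwa [hunion] at this
      have hpB' : p ≤ B * (1 - B) ^ S1.card := by
        refine le_trans hpB (mul_le_mul_of_nonneg_left ?_ hB0)
        exact pow_le_pow_of_le_one h1B (by linarith) hS1d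
      calc (cnt V β (fun ω => Bad e ω ∧ ∀ f ∈ S, ¬ Bad f ω) : ℝ)
          ≤ p * Good S2 := le_trans mono1 h2
        _ ≤ (B * (1 - B) ^ S1.card) * Good S2 := by
            apply mul_le_mul_of_nonneg_right hpB' (by positivity)
        _ = B * ((1 - B) ^ S1.card * Good S2) := by ring
        _ ≤ B * Good S := mul_le_mul_of_nonneg_left h3 hB0
  -- lower bound by induction
  have lower : ∀ S : Finset (Finset V), S ⊆ E → (1 - B) ^ S.card * (Nat.card (V → β) : ℝ) ≤ Good S := by
    intro S
    induction S using Finset.induction_on with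
    | empty =>
      intro _
      simp only [Finset.card_empty, pow_zero, one_mul]
      have : Good ∅ = Nat.card (V → β) := by
        rw [hGood]
        simp only
        rw [cnt_congr (Q := fun _ => True) (by simp), cnt_eq_card]
        exact Nat.card_congr (Equiv.subtypeUnivEquiv fun _ => trivial)
      rw [this]
    | @insert f S hfS ihS =>
      intro hins
      have hSE : S ⊆ E := fun g hg => hins (Finset.mem_insert_of_mem hg)
      have hfE : f ∈ E := hins (Finset.mem_insert_self f S)
      have hkey := key S.card S hSE rfl f hfE hfS
      have hsplit := split_ins f S
      have hcast : (Good S : ℝ) = (cnt V β (fun ω => Bad f ω ∧ ∀ g ∈ S, ¬ Bad g ω) : ℝ)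
          + Good (insert f S) := by exact_mod_cast hsplit
      have hge : (1 - B) * (Good S : ℝ) ≤ Good (insert f S) := by nlinarith
      rw [Finset.card_insert_of_notMem hfS, pow_succ]
      calc (1 - B) ^ S.card * (1 - B) * (Nat.card (V → β) : ℝ)
          = (1 - B) * ((1 - B) ^ S.card * (Nat.card (V → β) : ℝ)) := by ring
        _ ≤ (1 - B) * Good S := mul_le_mul_of_nonneg_left (ihS hSE) h1B
        _ ≤ Good (insert f S) := hge
  have hfinal := lower E (le_refl E)
  have hpos : (0:ℝ) < (1 - B) ^ E.card * (Nat.card (V → β) : ℝ) := by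
    apply mul_pos (pow_pos (by linarith) _)
    exact_mod_cast hΩ
  have : (0:ℝ) < Good E := lt_of_lt_of_le hpos hfinal
  exact_mod_cast this

end

section
variable {α : Type*} [Fintype α] [DecidableEq α]

lemma bad_count (x : ℕ) (f : Finset α) (hf : f.Nonempty) :
    cnt α (Fin x → Bool) (fun ω => ∀ u ∈ f, ∀ v ∈ f, ω u = ω v)
      = 2 ^ x * (2 ^ x) ^ (Fintype.card α - f.card) := by
  classical
  obtain ⟨u0, hu0⟩ := hf
  rw [cnt_eq_card]
  have e : {ω : α → (Fin x → Bool) // ∀ u ∈ f, ∀ v ∈ f, ω u = ω v}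
      ≃ (Fin x → Bool) × ({a : α // a ∉ f} → (Fin x → Bool)) := by
    refine ⟨fun ω => (ω.1 u0, fun a => ω.1 a.1), fun z => ⟨fun a => if h : a ∈ f then z.1 else z.2 ⟨a, h⟩, ?_⟩, ?_, ?_⟩
    · intro u hu v hv
      simp [hu, hv]
    · rintro ⟨ω, hω⟩
      ext a
      · by_cases h : a ∈ f
        · simp only [dif_pos h]
          exact congrFun (hω u0 hu0 a h) _
        · simp [h]
    · rintro ⟨b, g⟩
      refine Prod.ext ?_ ?_
      · simp [hu0]
      · funext a
        simp [a.2]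
  rw [Nat.card_congr e, Nat.card_prod, Nat.card_eq_fintype_card, Nat.card_eq_fintype_card]
  congr 1
  · simp
  · rw [Fintype.card_fun]
    congr 1
    · simp
    · rw [Fintype.card_subtype_compl, Fintype.card_coe]

lemma pow_arith (x k A : ℕ) (hk : 2 ≤ k) (hA : k ≤ A) :
    2 ^ x * (2 ^ x) ^ (A - k) * 2 ^ (x * (k - 1)) = (2 ^ x) ^ A := by
  obtain ⟨j, hj⟩ : ∃ j, k = j + 2 := ⟨k - 2, by omega⟩
  obtain ⟨m, hm⟩ : ∃ m, A = k + m := ⟨A - k, by omega⟩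
  rw [hm, hj]
  rw [show j + 2 + m - (j + 2) = m by omega, show j + 2 - 1 = j + 1 by omega]
  rw [← pow_mul, ← pow_mul, ← pow_add, ← pow_add]
  congr 1
  ring

end

/-- A family of `t` bicolorings covers the hypergraph with edge set `E` if every
hyperedge is non-monochromatic under at least one bicoloring. -/
def Covers {α : Type*} (E : Finset (Finset α)) {t : ℕ} (X : Fin t → α → Bool) : Prop :=
  ∀ e ∈ E, ∃ i : Fin t, ∃ u ∈ e, ∃ v ∈ e, X i u ≠ X i v

/-- The bicoloring cover number: minimum size of a bicoloring cover. -/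
noncomputable def coverNum {α : Type*} (E : Finset (Finset α)) : ℕ :=
  sInf {t | ∃ X : Fin t → α → Bool, Covers E X}

theorem cover_of_bounded_dependency {α : Type*} [Fintype α] [DecidableEq α]
    (E : Finset (Finset α)) (k x d : ℕ) (hk : 2 ≤ k) (hx : 1 ≤ x)
    (huniform : ∀ e ∈ E, e.card = k)
    (hdep : ∀ e ∈ E, (E.filter (fun f => f ≠ e ∧ (e ∩ f).Nonempty)).card ≤ d)
    (hlll : Real.exp 1 * ((d : ℝ) + 1) ≤ 2 ^ (x * (k - 1))) :
    ∃ X : Fin x → α → Bool, Covers E X := by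
  classical
  set β := (Fin x → Bool) with hβ
  set Bad : Finset α → (α → β) → Prop := fun f ω => ∀ u ∈ f, ∀ v ∈ f, ω u = ω v with hBad
  set p : ℝ := ((2:ℝ) ^ (x * (k - 1)))⁻¹ with hpdef
  have h2pos : (0:ℝ) < 2 ^ (x * (k - 1)) := by positivity
  have hp0 : 0 ≤ p := by positivity
  have hexp : (1:ℝ) < Real.exp 1 := by
    have := Real.add_one_le_exp (1:ℝ); linarith
  have hdpos : (0:ℝ) < (d:ℝ) + 1 := by positivity
  have hple : p ≤ (Real.exp 1 * ((d:ℝ) + 1))⁻¹ := by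
    rw [hpdef]
    apply inv_anti₀ (by positivity) hlll
  -- counting hypothesis
  have hcount : ∀ f ∈ E, (cnt α β (Bad f) : ℝ) ≤ p * Nat.card (α → β) := by
    intro f hfE
    have hfk : f.card = k := huniform f hfE
    have hfne : f.Nonempty := Finset.card_pos.mp (by omega)
    have hka : k ≤ Fintype.card α := hfk ▸ Finset.card_le_univ f
    have hcnt := bad_count x f hfne
    have hcard : Nat.card (α → β) = (2 ^ x) ^ (Fintype.card α) := by
      rw [Nat.card_eq_fintype_card, Fintype.card_fun]
      congr 1
      simp [hβ]
    have hnat : cnt α β (Bad f) * 2 ^ (x * (k - 1)) = Nat.card (α → β) := by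
      rw [hcnt, hcard, hfk]
      exact pow_arith x k (Fintype.card α) hk hka
    have heq : (cnt α β (Bad f) : ℝ) * 2 ^ (x * (k - 1)) = Nat.card (α → β) := by
      exact_mod_cast hnat
    rw [hpdef, inv_mul_eq_div, le_div_iff₀ h2pos]
    linarith
  -- dependence of Bad f only on coordinates in f
  have hBdep : ∀ f : Finset α, ∀ ω ω' : α → β, (∀ a ∈ f, ω a = ω' a) → (Bad f ω ↔ Bad f ω') := by
    intro f ω ω' hagree
    constructor <;> intro h u hu v hv
    · rw [← hagree u hu, ← hagree v hv]; exact h u hu v hv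
    · rw [hagree u hu, hagree v hv]; exact h u hu v hv
  -- choice of B and the numeric conditions
  have hnum : ∃ B : ℝ, 0 ≤ B ∧ B < 1 ∧ p ≤ B * (1 - B) ^ d := by
    rcases Nat.eq_zero_or_pos d with hd | hd
    · subst hd
      refine ⟨p, hp0, ?_, by simp⟩
      have h1 : Real.exp 1 * ((0:ℝ) + 1) = Real.exp 1 := by ring
      have h2 : Real.exp 1 ≤ 2 ^ (x * (k - 1)) := by
        have := hlll; norm_num at this; linarith
      rw [hpdef, inv_lt_one_iff₀]
      right; linarith
    · have hdR : (1:ℝ) ≤ (d:ℝ) := by exact_mod_cast hd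
      have hd0 : (0:ℝ) < (d:ℝ) := by linarith
      have hQ0 : (0:ℝ) ≤ ((d:ℝ) / ((d:ℝ) + 1)) ^ d := by positivity
      refine ⟨1 / ((d:ℝ) + 1), by positivity, ?_, ?_⟩
      · rw [div_lt_one (by positivity)]; linarith
      · have h1 : (1:ℝ) - 1 / ((d:ℝ) + 1) = (d:ℝ) / ((d:ℝ) + 1) := by
          field_simp
          ring
        rw [h1]
        have h2 : (((d:ℝ) + 1) / (d:ℝ)) ^ d ≤ Real.exp 1 := by
          have h3 : ((d:ℝ) + 1) / (d:ℝ) ≤ Real.exp (1 / (d:ℝ)) := by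
            have h := Real.add_one_le_exp (1 / (d:ℝ))
            rw [add_div, div_self (ne_of_gt hd0)]
            linarith
          have h4 : (((d:ℝ) + 1) / (d:ℝ)) ^ d ≤ Real.exp (1 / (d:ℝ)) ^ d :=
            pow_le_pow_left₀ (by positivity) h3 d
          have h5 : Real.exp (1 / (d:ℝ)) ^ d = Real.exp 1 := by
            rw [← Real.exp_nat_mul]
            congr 1
            field_simp
          rwa [h5] at h4
        have hmul : (((d:ℝ) + 1) / (d:ℝ)) ^ d * ((d:ℝ) / ((d:ℝ) + 1)) ^ d = 1 := by
          have hone : ((d:ℝ) + 1) / (d:ℝ) * ((d:ℝ) / ((d:ℝ) + 1)) = 1 := by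
            field_simp
          rw [← mul_pow, hone, one_pow]
        have step : (1:ℝ) ≤ Real.exp 1 * ((d:ℝ) / ((d:ℝ) + 1)) ^ d := by
          calc (1:ℝ) = (((d:ℝ) + 1) / (d:ℝ)) ^ d * ((d:ℝ) / ((d:ℝ) + 1)) ^ d := hmul.symm
            _ ≤ Real.exp 1 * ((d:ℝ) / ((d:ℝ) + 1)) ^ d := mul_le_mul_of_nonneg_right h2 hQ0
        calc p ≤ (Real.exp 1 * ((d:ℝ) + 1))⁻¹ := hple
          _ ≤ 1 / ((d:ℝ) + 1) * ((d:ℝ) / ((d:ℝ) + 1)) ^ d := by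
              rw [inv_eq_one_div, div_le_iff₀ (by positivity)]
              calc (1:ℝ) ≤ Real.exp 1 * ((d:ℝ) / ((d:ℝ) + 1)) ^ d := step
                _ = 1 / ((d:ℝ) + 1) * ((d:ℝ) / ((d:ℝ) + 1)) ^ d * (Real.exp 1 * ((d:ℝ) + 1)) := by
                    field_simp
  obtain ⟨B, hB0, hB1, hpB⟩ := hnum
  have hpos := lll_core Bad hBdep E d hdep p B hp0 hB0 hB1 hpB hcount
  obtain ⟨ω, hω⟩ := cnt_pos.mp hpos
  refine ⟨fun i a => ω a i, ?_⟩
  intro e heE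
  have hne : ¬ Bad e ω := hω e heE
  have hne' : ∃ u ∈ e, ∃ v ∈ e, ω u ≠ ω v := by
    by_contra hcon
    push_neg at hcon
    exact hne (fun u hu v hv => hcon u hu v hv)
  obtain ⟨u, hu, v, hv, huv⟩ := hne'
  obtain ⟨i, hi⟩ := Function.ne_iff.mp huv
  exact ⟨i, u, hu, v, hv, hi⟩
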